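/- Let X be a finite nonempty set and T a row-stochastic transition matrix on X (T(j | i) ≥ 0 and ∑_j T(j | i) = 1 for each i) with minimal mixing rate γ := min_{i₁,i₂} ∑_j min{T(j | i₁), T(j | i₂)}. Then for any two probability distributions φ and ψ on X, δ(T·φ, T·ψ) ≤ (1 − γ)·δ(φ, ψ), where (T·φ)(j) = ∑_i T(j | i)·φ(i). -/
import Mathlib


/-- Let `T` be a row-stochastic transition matrix on a finite nonempty set `X`
with minimal mixing rate `γ = min_{i₁,i₂} ∑_j min{T(j|i₁), T(j|i₂)}`. Then for any two
probability distributions `φ` and `ψ` on `X`,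
`δ(T·φ, T·ψ) ≤ (1 − γ)·δ(φ, ψ)`, where `(T·φ)(j) = ∑_i T(j|i)·φ(i)`. -/
theorem tv_dist_contraction_mixing_rate
    {X : Type*} [Fintype X] [Nonempty X]
    (T : X → X → ℝ) (hT0 : ∀ i j, 0 ≤ T i j) (hT1 : ∀ i, ∑ j, T i j = 1)
    (γ : ℝ)
    (hγ : γ = Finset.univ.inf' Finset.univ_nonempty
      (fun q : X × X => ∑ j, min (T q.1 j) (T q.2 j)))
    (φ ψ : X → ℝ)
    (hφ0 : ∀ x, 0 ≤ φ x) (hφ1 : ∑ x, φ x = 1)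
    (hψ0 : ∀ x, 0 ≤ ψ x) (hψ1 : ∑ x, ψ x = 1) :
    (1 / 2) * ∑ j, |(∑ i, T i j * φ i) - (∑ i, T i j * ψ i)| ≤
      (1 - γ) * ((1 / 2) * ∑ x, |φ x - ψ x|) := by
  classical
  set p : X → ℝ := fun i => max (φ i - ψ i) 0 with hp
  set q : X → ℝ := fun i => max (ψ i - φ i) 0 with hq
  have hp0 : ∀ i, 0 ≤ p i := fun i => le_max_right _ _
  have hq0 : ∀ i, 0 ≤ q i := fun i => le_max_right _ _
  have hpq : ∀ i, φ i - ψ i = p i - q i := by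
    intro i
    rcases le_total (φ i) (ψ i) with h | h <;>
      simp [hp, hq, max_eq_left, max_eq_right, sub_nonneg.2 h, sub_nonpos.2 h] <;> linarith
  have habs : ∀ i, |φ i - ψ i| = p i + q i := by
    intro i
    rcases le_total (φ i) (ψ i) with h | h
    · rw [abs_of_nonpos (by linarith)]
      simp [hp, hq, max_eq_left, max_eq_right, sub_nonneg.2 h, sub_nonpos.2 h]
    · rw [abs_of_nonneg (by linarith)]
      simp [hp, hq, max_eq_left, max_eq_right, sub_nonneg.2 h, sub_nonpos.2 h]
  set D : ℝ := ∑ i, p i with hD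
  have hD0 : 0 ≤ D := Finset.sum_nonneg fun i _ => hp0 i
  have hqD : ∑ i, q i = D := by
    have h0 : ∑ i, (φ i - ψ i) = 0 := by
      rw [Finset.sum_sub_distrib, hφ1, hψ1]; ring
    have h1 : ∑ i, (p i - q i) = 0 := by
      rw [← h0]; exact Finset.sum_congr rfl fun i _ => (hpq i).symm
    rw [Finset.sum_sub_distrib] at h1
    rw [hD]; linarith
  set a : X → ℝ := fun j => ∑ i, T i j * p i with ha
  set b : X → ℝ := fun j => ∑ i, T i j * q i with hb
  have ha0 : ∀ j, 0 ≤ a j := fun j => Finset.sum_nonneg fun i _ => mul_nonneg (hT0 i j) (hp0 i)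
  have hb0 : ∀ j, 0 ≤ b j := fun j => Finset.sum_nonneg fun i _ => mul_nonneg (hT0 i j) (hq0 i)
  have hsuma : ∑ j, a j = D := by
    rw [ha]
    rw [Finset.sum_comm]
    calc ∑ i, ∑ j, T i j * p i = ∑ i, (∑ j, T i j) * p i := by
            simp [Finset.sum_mul]
      _ = ∑ i, p i := by simp [hT1]
      _ = D := rfl
  have hsumb : ∑ j, b j = D := by
    rw [hb]
    rw [Finset.sum_comm]
    calc ∑ i, ∑ j, T i j * q i = ∑ i, (∑ j, T i j) * q i := by
            simp [Finset.sum_mul]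
      _ = ∑ i, q i := by simp [hT1]
      _ = D := hqD
  set S : ℝ := ∑ j, min (a j) (b j) with hS
  have hS0 : 0 ≤ S := Finset.sum_nonneg fun j _ => le_min (ha0 j) (hb0 j)
  -- key: γ * D ≤ S
  have hkey : γ * D ≤ S := by
    rcases eq_or_lt_of_le hD0 with hDz | hDpos
    · rw [← hDz, mul_zero]; exact hS0
    · have hDS : γ * D * D ≤ S * D := by
        have h1 : ∀ j, ∑ i, ∑ k, p i * q k * min (T i j) (T k j) ≤ min (a j) (b j) * D := by
          intro j
          have hL : ∑ i, ∑ k, p i * q k * min (T i j) (T k j) ≤ a j * D := by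
            calc ∑ i, ∑ k, p i * q k * min (T i j) (T k j)
                ≤ ∑ i, ∑ k, p i * q k * T i j := by
                  refine Finset.sum_le_sum fun i _ => Finset.sum_le_sum fun k _ => ?_
                  exact mul_le_mul_of_nonneg_left (min_le_left _ _)
                    (mul_nonneg (hp0 i) (hq0 k))
              _ = a j * D := by
                  rw [ha, ← hqD, Finset.sum_mul]
                  refine Finset.sum_congr rfl fun i _ => ?_
                  rw [Finset.mul_sum]
                  refine Finset.sum_congr rfl fun k _ => by ring
          have hR : ∑ i, ∑ k, p i * q k * min (T i j) (T k j) ≤ b j * D := by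
            calc ∑ i, ∑ k, p i * q k * min (T i j) (T k j)
                ≤ ∑ i, ∑ k, p i * q k * T k j := by
                  refine Finset.sum_le_sum fun i _ => Finset.sum_le_sum fun k _ => ?_
                  exact mul_le_mul_of_nonneg_left (min_le_right _ _)
                    (mul_nonneg (hp0 i) (hq0 k))
              _ = b j * D := by
                  rw [hb, hD, Finset.sum_comm, Finset.sum_mul]
                  refine Finset.sum_congr rfl fun k _ => ?_
                  rw [Finset.mul_sum]
                  refine Finset.sum_congr rfl fun i _ => by ring
          rcases le_total (a j) (b j) with h | h
          · rw [min_eq_left h]; exact hL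
          · rw [min_eq_right h]; exact hR
        have h2 : ∑ j, ∑ i, ∑ k, p i * q k * min (T i j) (T k j) ≤ S * D := by
          rw [hS, Finset.sum_mul]
          exact Finset.sum_le_sum fun j _ => h1 j
        have h3 : γ * D * D ≤ ∑ j, ∑ i, ∑ k, p i * q k * min (T i j) (T k j) := by
          have hswap : ∑ j, ∑ i, ∑ k, p i * q k * min (T i j) (T k j)
              = ∑ i, ∑ k, p i * q k * ∑ j, min (T i j) (T k j) := by
            rw [Finset.sum_comm]
            refine Finset.sum_congr rfl fun i _ => ?_
            rw [Finset.sum_comm]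
            refine Finset.sum_congr rfl fun k _ => ?_
            rw [Finset.mul_sum]
          rw [hswap]
          have hγle : ∀ i k : X, γ ≤ ∑ j, min (T i j) (T k j) := by
            intro i k
            rw [hγ]
            exact Finset.inf'_le _ (Finset.mem_univ (i, k))
          calc γ * D * D = ((∑ i, p i) * (∑ k, q k)) * γ := by
                rw [hD, hqD]; ring
            _ = ∑ i, ∑ k, p i * q k * γ := by
                rw [Finset.sum_mul_sum, Finset.sum_mul]
                exact Finset.sum_congr rfl fun i _ => by rw [Finset.sum_mul]
            _ ≤ ∑ i, ∑ k, p i * q k * ∑ j, min (T i j) (T k j) := by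
                refine Finset.sum_le_sum fun i _ => Finset.sum_le_sum fun k _ => ?_
                exact mul_le_mul_of_nonneg_left (hγle i k) (mul_nonneg (hp0 i) (hq0 k))
        exact le_trans h3 h2
      exact le_of_mul_le_mul_right hDS hDpos
  -- finish
  have habs2 : ∀ j, |(∑ i, T i j * φ i) - (∑ i, T i j * ψ i)| = a j + b j - 2 * min (a j) (b j) := by
    intro j
    have hd : (∑ i, T i j * φ i) - (∑ i, T i j * ψ i) = a j - b j := by
      rw [ha, hb, ← Finset.sum_sub_distrib, ← Finset.sum_sub_distrib]
      refine Finset.sum_congr rfl fun i _ => ?_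
      rw [← mul_sub, ← mul_sub, hpq i]
    rw [hd]
    rcases le_total (a j) (b j) with h | h
    · rw [min_eq_left h, abs_of_nonpos (by linarith)]; ring
    · rw [min_eq_right h, abs_of_nonneg (by linarith)]; ring
  have hLHS : ∑ j, |(∑ i, T i j * φ i) - (∑ i, T i j * ψ i)| = 2 * D - 2 * S := by
    calc ∑ j, |(∑ i, T i j * φ i) - (∑ i, T i j * ψ i)|
        = ∑ j, (a j + b j - 2 * min (a j) (b j)) := Finset.sum_congr rfl fun j _ => habs2 j
      _ = (∑ j, a j) + (∑ j, b j) - 2 * S := by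
          rw [hS, Finset.sum_sub_distrib, Finset.sum_add_distrib, Finset.mul_sum]
      _ = 2 * D - 2 * S := by rw [hsuma, hsumb]; ring
  have hRHS : ∑ x, |φ x - ψ x| = 2 * D := by
    calc ∑ x, |φ x - ψ x| = ∑ x, (p x + q x) := Finset.sum_congr rfl fun x _ => habs x
      _ = 2 * D := by rw [Finset.sum_add_distrib, hqD, hD]; ring
  rw [hLHS, hRHS]
  nlinarith [hkey]
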